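/- For any measurable m : Ω → [0,1] with ‖m‖₁ > 0, letting D* = sup over segmentations s of D_m(s), one has F_m(1/2) ≤ F_m((1 - D*/2)-); i.e., the largest Accuracy-optimal volume is at most the smallest Dice-optimal volume. -/

import Mathlib

open MeasureTheory Set

noncomputable section

/-- Normalized Lebesgue measure on the unit cube `[0,1]^n`. -/
def cubeMeasure (n : ℕ) : Measure (Fin n → ℝ) :=
  volume.restrict (Set.univ.pi fun _ => Set.Icc (0:ℝ) 1)

/-- A segmentation: a measurable `{0,1}`-valued function on the cube. -/
def IsSeg {n : ℕ} (s : (Fin n → ℝ) → ℝ) : Prop :=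
  Measurable s ∧ ∀ ω, s ω = 0 ∨ s ω = 1

/-- A marginal function: a measurable `[0,1]`-valued function on the cube. -/
def IsMarg {n : ℕ} (m : (Fin n → ℝ) → ℝ) : Prop :=
  Measurable m ∧ ∀ ω, m ω ∈ Set.Icc (0:ℝ) 1

/-- The volume `‖f‖₁ = ∫ f dλ` (for nonnegative `f`). -/
def vol {n : ℕ} (f : (Fin n → ℝ) → ℝ) : ℝ := ∫ ω, f ω ∂(cubeMeasure n)

/-- `F_m(t) = λ({ω : 1 - m(ω) ≤ t})`. -/
def Fcdf {n : ℕ} (m : (Fin n → ℝ) → ℝ) (t : ℝ) : ℝ :=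
  ((cubeMeasure n) {ω | 1 - m ω ≤ t}).toReal

/-- The left limit `F_m(t-) = λ({ω : 1 - m(ω) < t})`. -/
def FcdfMinus {n : ℕ} (m : (Fin n → ℝ) → ℝ) (t : ℝ) : ℝ :=
  ((cubeMeasure n) {ω | 1 - m ω < t}).toReal

/-- The generalized inverse (quantile function) `F_m⁻¹(v) = inf{t ∈ [0,1] : F_m(t) ≥ v}`. -/
def Finv {n : ℕ} (m : (Fin n → ℝ) → ℝ) (v : ℝ) : ℝ :=
  sInf {t | t ∈ Set.Icc (0:ℝ) 1 ∧ v ≤ Fcdf m t}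

/-- Dice. -/
def Dice {n : ℕ} (m s : (Fin n → ℝ) → ℝ) : ℝ :=
  2 * (∫ ω, s ω * m ω ∂(cubeMeasure n)) / (vol s + vol m)

instance cubeMeasure_prob (n : ℕ) : IsProbabilityMeasure (cubeMeasure n) := by
  constructor
  rw [cubeMeasure, Measure.restrict_apply_univ, volume_pi_pi]
  simp [Real.volume_Icc]

lemma integrable_of_Icc {n : ℕ} {f : (Fin n → ℝ) → ℝ} (hf : Measurable f)
    (hb : ∀ ω, f ω ∈ Set.Icc (0:ℝ) 1) : Integrable f (cubeMeasure n) := by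
  refine (integrable_const (1:ℝ)).mono' hf.aestronglyMeasurable ?_
  refine ae_of_all _ fun ω => ?_
  rw [Real.norm_eq_abs, abs_le]
  exact ⟨by linarith [(hb ω).1], (hb ω).2⟩

lemma seg_mem_Icc {n : ℕ} {s : (Fin n → ℝ) → ℝ} (hs : IsSeg s) (ω : Fin n → ℝ) :
    s ω ∈ Set.Icc (0:ℝ) 1 := by
  rcases hs.2 ω with h | h <;> rw [h] <;> constructor <;> norm_num

lemma vol_le_one {n : ℕ} {f : (Fin n → ℝ) → ℝ} (hf : Measurable f)
    (hb : ∀ ω, f ω ∈ Set.Icc (0:ℝ) 1) : vol f ≤ 1 := by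
  have := integral_mono (integrable_of_Icc hf hb) (integrable_const (1:ℝ))
    (fun ω => (hb ω).2)
  simpa [vol] using this

lemma vol_nonneg {n : ℕ} {f : (Fin n → ℝ) → ℝ}
    (hb : ∀ ω, f ω ∈ Set.Icc (0:ℝ) 1) : 0 ≤ vol f :=
  integral_nonneg fun ω => (hb ω).1

lemma dice_le {n : ℕ} {m : (Fin n → ℝ) → ℝ} (hm : IsMarg m) (h0 : 0 < vol m)
    {s : (Fin n → ℝ) → ℝ} (hs : IsSeg s) :
    Dice m s ≤ 1 - ((cubeMeasure n) {ω | m ω = 1/2}).toReal / 4 := by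
  set μ := cubeMeasure n
  set E : Set (Fin n → ℝ) := {ω | m ω = 1/2} with hEdef
  have hE : MeasurableSet E := hm.1 (measurableSet_singleton (1/2 : ℝ))
  set p : ℝ := (μ E).toReal with hpdef
  have hp0 : 0 ≤ p := ENNReal.toReal_nonneg
  have im : Integrable m μ := integrable_of_Icc hm.1 hm.2
  have is : Integrable s μ := integrable_of_Icc hs.1 (seg_mem_Icc hs)
  have ism : Integrable (fun ω => s ω * m ω) μ := by
    refine integrable_of_Icc (hs.1.mul hm.1) fun ω => ?_
    constructor
    · exact mul_nonneg (seg_mem_Icc hs ω).1 (hm.2 ω).1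
    · exact mul_le_one₀ (seg_mem_Icc hs ω).2 (hm.2 ω).1 (hm.2 ω).2
  have key : (1/2) * p ≤ vol s + vol m - 2 * ∫ ω, s ω * m ω ∂μ := by
    have hpt : ∀ ω, E.indicator (fun _ => (1/2 : ℝ)) ω ≤
        s ω + m ω - 2 * (s ω * m ω) := by
      intro ω
      have hm2 := hm.2 ω
      by_cases hω : ω ∈ E
      · rw [Set.indicator_of_mem hω]
        have : m ω = 1/2 := hω
        rcases hs.2 ω with h | h <;> rw [h, this] <;> norm_num
      · rw [Set.indicator_of_notMem hω]
        rcases hs.2 ω with h | h <;> rw [h]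
        · linarith [hm2.1]
        · nlinarith [hm2.1, hm2.2]
    have hind : Integrable (E.indicator fun _ => (1/2 : ℝ)) μ :=
      (integrable_const _).indicator hE
    have hint := integral_mono hind ((is.add im).sub (ism.const_mul 2)) hpt
    rw [integral_indicator_const _ hE] at hint
    simp only [Pi.sub_apply, Pi.add_apply] at hint
    have e1 := integral_sub (μ := μ) (is.add im) (ism.const_mul 2)
    have e2 := integral_add (μ := μ) is im
    simp only [Pi.add_apply, Pi.sub_apply] at e1 e2
    rw [e1, e2, integral_const_mul, smul_eq_mul, measureReal_def, ← hpdef] at hint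
    simp only [vol]
    linarith
  have hd : 0 < vol s + vol m := by
    have := vol_nonneg (n := n) (seg_mem_Icc hs); linarith
  have hd2 : vol s + vol m ≤ 2 := by
    have h1 := vol_le_one hs.1 (seg_mem_Icc hs)
    have h2 := vol_le_one hm.1 hm.2
    linarith
  rw [Dice, div_le_iff₀ hd]
  nlinarith [key, hp0, hd2, hd]

theorem stmt11 {n : ℕ} {m : (Fin n → ℝ) → ℝ} (hm : IsMarg m) (h0 : 0 < vol m) :
    Fcdf m (1/2) ≤
      FcdfMinus m (1 - (sSup {x : ℝ | ∃ s, IsSeg s ∧ x = Dice m s}) / 2) := by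
  set μ := cubeMeasure n
  set E : Set (Fin n → ℝ) := {ω | m ω = 1/2} with hEdef
  set p : ℝ := (μ E).toReal with hpdef
  have hp0 : 0 ≤ p := ENNReal.toReal_nonneg
  set D : ℝ := sSup {x : ℝ | ∃ s, IsSeg s ∧ x = Dice m s} with hDdef
  have hD : D ≤ 1 - p / 4 := by
    refine csSup_le ⟨Dice m (fun _ => 0), fun _ => 0,
      ⟨measurable_const, fun _ => Or.inl rfl⟩, rfl⟩ ?_
    rintro x ⟨s, hs, rfl⟩
    exact dice_le hm h0 hs
  have hD1 : D ≤ 1 := by linarith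
  set B : Set (Fin n → ℝ) := {ω | 1 - m ω < 1 - D / 2}
  have hBne : μ B ≠ ⊤ := measure_ne_top μ B
  rw [Fcdf, FcdfMinus]
  refine ENNReal.toReal_mono hBne ?_
  rcases eq_or_lt_of_le hp0 with hp | hp
  · -- p = 0, so μ E = 0
    have hE0 : μ E = 0 := by
      rcases (ENNReal.toReal_eq_zero_iff (μ E)).mp hp.symm with h | h
      · exact h
      · exact absurd h (measure_ne_top μ E)
    have hsub : {ω | 1 - m ω ≤ 1/2} ⊆ B ∪ E := by
      intro ω hω
      by_cases hωE : ω ∈ E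
      · exact Or.inr hωE
      · left
        have h1 : (1/2 : ℝ) ≤ m ω := by
          simp only [Set.mem_setOf_eq] at hω; linarith
        have h2 : m ω ≠ 1/2 := hωE
        have h3 : 1/2 < m ω := lt_of_le_of_ne h1 (Ne.symm h2)
        show 1 - m ω < 1 - D / 2
        linarith
    calc μ {ω | 1 - m ω ≤ 1/2} ≤ μ (B ∪ E) := measure_mono hsub
    _ ≤ μ B + μ E := measure_union_le _ _
    _ = μ B := by rw [hE0, add_zero]
  · -- p > 0, so D < 1
    have hDlt : D < 1 := by linarith
    refine measure_mono fun ω hω => ?_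
    have h1 : (1/2 : ℝ) ≤ m ω := by
      simp only [Set.mem_setOf_eq] at hω; linarith
    show 1 - m ω < 1 - D / 2
    linarith
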